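/- arXiv:1412.5061 — 4 statements merged into one kernel-verified Lean document; each statement's English description precedes it below -/
import Mathlib

section
/- For any u ∈ ℂ⁴, ⟨βu,u⟩² + Σ_{k=1}^{3} ⟨αₖu,u⟩² ≤ |u|⁴_{ℂ⁴} (note that ⟨βu,u⟩ and ⟨αₖu,u⟩ are real since β, αₖ are Hermitian). -/
open Matrix

noncomputable def PauliMat : Fin 3 → Matrix (Fin 2) (Fin 2) ℂ
  | 0 => !![0, 1; 1, 0]
  | 1 => !![0, -Complex.I; Complex.I, 0]
  | 2 => !![1, 0; 0, -1]

/-- β = [[I,0],[0,-I]] as a 4×4 matrix. -/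
noncomputable def DiracBeta : Matrix (Fin 4) (Fin 4) ℂ :=
  (Matrix.reindex (finSumFinEquiv : Fin 2 ⊕ Fin 2 ≃ Fin 4) (finSumFinEquiv : Fin 2 ⊕ Fin 2 ≃ Fin 4))
    (Matrix.fromBlocks (1 : Matrix (Fin 2) (Fin 2) ℂ) 0 0 (-1))

/-- αₖ = [[0,σₖ],[σₖ,0]] as a 4×4 matrix. -/
noncomputable def DiracAlpha (k : Fin 3) : Matrix (Fin 4) (Fin 4) ℂ :=
  (Matrix.reindex (finSumFinEquiv : Fin 2 ⊕ Fin 2 ≃ Fin 4) (finSumFinEquiv : Fin 2 ⊕ Fin 2 ≃ Fin 4))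
    (Matrix.fromBlocks 0 (PauliMat k) (PauliMat k) 0)


/-- Hermitian inner product ⟨w, u⟩ = ∑ wᵢ ūᵢ on ℂ⁴. -/
noncomputable def hdot (w u : Fin 4 → ℂ) : ℂ := ∑ i, w i * starRingEnd ℂ (u i)

theorem dirac_quadratic_forms_estimate (u : Fin 4 → ℂ) :
    (hdot (DiracBeta.mulVec u) u).re ^ 2
      + ∑ k : Fin 3, (hdot ((DiracAlpha k).mulVec u) u).re ^ 2
      ≤ (∑ i, ‖u i‖ ^ 2) ^ 2 := by
  simp only [hdot, DiracBeta, DiracAlpha, PauliMat, Fin.sum_univ_four, Fin.sum_univ_three,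
    mulVec, dotProduct, Fin.sum_univ_four, reindex_apply, submatrix_apply,
    Complex.sq_norm, Complex.normSq_apply]
  norm_num [Fin.isValue, show (finSumFinEquiv.symm (0:Fin 4) : Fin 2 ⊕ Fin 2) = Sum.inl 0 from rfl,
    show (finSumFinEquiv.symm (1:Fin 4) : Fin 2 ⊕ Fin 2) = Sum.inl 1 from rfl,
    show (finSumFinEquiv.symm (2:Fin 4) : Fin 2 ⊕ Fin 2) = Sum.inr 0 from rfl,
    show (finSumFinEquiv.symm (3:Fin 4) : Fin 2 ⊕ Fin 2) = Sum.inr 1 from rfl,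
    fromBlocks_apply₁₁, fromBlocks_apply₁₂, fromBlocks_apply₂₁, fromBlocks_apply₂₂,
    Matrix.one_apply, Matrix.cons_val_zero, Matrix.cons_val_one, Matrix.head_cons,
    Complex.mul_re, Complex.mul_im, Complex.conj_re, Complex.conj_im, Complex.add_re,
    Complex.add_im, Complex.I_re, Complex.I_im]
  nlinarith [sq_nonneg ((u 0).im*(u 2).re - (u 0).re*(u 2).im + (u 1).im*(u 3).re - (u 1).re*(u 3).im)]
end

section
/- For any u, z ∈ ℂ⁴, one has ±⟨βz,z⟩⟨βu,u⟩ + Σ_{k=1}^{3} ⟨αₖz,z⟩⟨αₖu,u⟩ ≤ |z|²_{ℂ⁴} · |u|²_{ℂ⁴} (with either choice of sign in the first term). -/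
open Matrix

lemma beta_eq' : DiracBeta = !![1,0,0,0;0,1,0,0;0,0,-1,0;0,0,0,-1] := by
  ext i j
  fin_cases i <;> fin_cases j <;>
    simp [DiracBeta, Matrix.fromBlocks, finSumFinEquiv, Fin.addCases, Fin.subNat, Fin.castLT,
      Matrix.one_apply,
      show ((0:Fin 4):ℕ) < 2 by decide, show ((1:Fin 4):ℕ) < 2 by decide,
      show ¬((2:Fin 4):ℕ) < 2 by decide, show ¬((3:Fin 4):ℕ) < 2 by decide] <;>
    first | rfl | decide

lemma alpha0_eq' : DiracAlpha 0 = !![0,0,0,1;0,0,1,0;0,1,0,0;1,0,0,0] := by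
  ext i j
  fin_cases i <;> fin_cases j <;>
    simp [DiracAlpha, PauliMat, Matrix.fromBlocks, finSumFinEquiv, Fin.addCases, Fin.subNat, Fin.castLT,
      show ((0:Fin 4):ℕ) < 2 by decide, show ((1:Fin 4):ℕ) < 2 by decide,
      show ¬((2:Fin 4):ℕ) < 2 by decide, show ¬((3:Fin 4):ℕ) < 2 by decide] <;>
    first | rfl | decide

lemma alpha1_eq' : DiracAlpha 1 = !![0,0,0,-Complex.I;0,0,Complex.I,0;0,-Complex.I,0,0;Complex.I,0,0,0] := by
  ext i j
  fin_cases i <;> fin_cases j <;>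
    simp [DiracAlpha, PauliMat, Matrix.fromBlocks, finSumFinEquiv, Fin.addCases, Fin.subNat, Fin.castLT,
      show ((0:Fin 4):ℕ) < 2 by decide, show ((1:Fin 4):ℕ) < 2 by decide,
      show ¬((2:Fin 4):ℕ) < 2 by decide, show ¬((3:Fin 4):ℕ) < 2 by decide] <;>
    first | rfl | decide

lemma alpha2_eq' : DiracAlpha 2 = !![0,0,1,0;0,0,0,-1;1,0,0,0;0,-1,0,0] := by
  ext i j
  fin_cases i <;> fin_cases j <;>
    simp [DiracAlpha, PauliMat, Matrix.fromBlocks, finSumFinEquiv, Fin.addCases, Fin.subNat, Fin.castLT,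
      show ((0:Fin 4):ℕ) < 2 by decide, show ((1:Fin 4):ℕ) < 2 by decide,
      show ¬((2:Fin 4):ℕ) < 2 by decide, show ¬((3:Fin 4):ℕ) < 2 by decide] <;>
    first | rfl | decide

lemma hdot_beta_re (z : Fin 4 → ℂ) :
    (hdot (DiracBeta.mulVec z) z).re
      = (z 0).re^2+(z 0).im^2+(z 1).re^2+(z 1).im^2-(z 2).re^2-(z 2).im^2-(z 3).re^2-(z 3).im^2 := by
  simp [hdot, beta_eq', Matrix.mulVec, dotProduct, Fin.sum_univ_four,
    Complex.add_re, Complex.mul_re, Complex.conj_re, Complex.conj_im, Matrix.vecHead, Matrix.vecTail, Function.comp]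
  ring

lemma hdot_a0_re (z : Fin 4 → ℂ) :
    (hdot ((DiracAlpha 0).mulVec z) z).re
      = 2*((z 3).re*(z 0).re + (z 3).im*(z 0).im + (z 2).re*(z 1).re + (z 2).im*(z 1).im) := by
  simp [hdot, alpha0_eq', Matrix.mulVec, dotProduct, Fin.sum_univ_four,
    Complex.add_re, Complex.mul_re, Complex.conj_re, Complex.conj_im, Matrix.vecHead, Matrix.vecTail, Function.comp]
  ring

lemma hdot_a1_re (z : Fin 4 → ℂ) :
    (hdot ((DiracAlpha 1).mulVec z) z).re
      = 2*((z 3).im*(z 0).re - (z 3).re*(z 0).im - (z 2).im*(z 1).re + (z 2).re*(z 1).im) := by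
  simp [hdot, alpha1_eq', Matrix.mulVec, dotProduct, Fin.sum_univ_four,
    Complex.add_re, Complex.mul_re, Complex.mul_im, Complex.conj_re, Complex.conj_im, Complex.I_re, Complex.I_im, Matrix.vecHead, Matrix.vecTail, Function.comp]
  ring

lemma hdot_a2_re (z : Fin 4 → ℂ) :
    (hdot ((DiracAlpha 2).mulVec z) z).re
      = 2*((z 2).re*(z 0).re + (z 2).im*(z 0).im - (z 3).re*(z 1).re - (z 3).im*(z 1).im) := by
  simp [hdot, alpha2_eq', Matrix.mulVec, dotProduct, Fin.sum_univ_four,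
    Complex.add_re, Complex.mul_re, Complex.conj_re, Complex.conj_im, Matrix.vecHead, Matrix.vecTail, Function.comp]
  ring

lemma norm_sum_eq (z : Fin 4 → ℂ) :
    (∑ i, ‖z i‖ ^ 2) = (z 0).re^2+(z 0).im^2+(z 1).re^2+(z 1).im^2+(z 2).re^2+(z 2).im^2+(z 3).re^2+(z 3).im^2 := by
  simp [Fin.sum_univ_four, Complex.sq_norm, Complex.normSq_apply]
  ring

lemma key_ineq (z : Fin 4 → ℂ) :
    (hdot (DiracBeta.mulVec z) z).re ^ 2
      + (hdot ((DiracAlpha 0).mulVec z) z).re ^ 2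
      + (hdot ((DiracAlpha 1).mulVec z) z).re ^ 2
      + (hdot ((DiracAlpha 2).mulVec z) z).re ^ 2
      ≤ (∑ i, ‖z i‖ ^ 2) ^ 2 := by
  rw [hdot_beta_re, hdot_a0_re, hdot_a1_re, hdot_a2_re, norm_sum_eq]
  nlinarith [sq_nonneg ((z 0).im*(z 2).re - (z 0).re*(z 2).im + (z 1).im*(z 3).re - (z 1).re*(z 3).im)]

lemma cs4 (a0 a1 a2 a3 b0 b1 b2 b3 P Q : ℝ) (hP : 0 ≤ P) (hQ : 0 ≤ Q)
    (hA : a0^2+a1^2+a2^2+a3^2 ≤ P^2) (hB : b0^2+b1^2+b2^2+b3^2 ≤ Q^2) :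
    a0*b0+a1*b1+a2*b2+a3*b3 ≤ P*Q := by
  nlinarith [sq_nonneg (a0*b1-a1*b0), sq_nonneg (a0*b2-a2*b0), sq_nonneg (a0*b3-a3*b0),
    sq_nonneg (a1*b2-a2*b1), sq_nonneg (a1*b3-a3*b1), sq_nonneg (a2*b3-a3*b2),
    mul_nonneg hP hQ, sq_nonneg (a0*b0+a1*b1+a2*b2+a3*b3 + P*Q),
    sq_nonneg (b0^2+b1^2+b2^2+b3^2), sq_nonneg P, sq_nonneg Q,
    mul_nonneg (mul_nonneg hP hP) (mul_nonneg hQ hQ)]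


theorem dirac_bilinear_estimate (u z : Fin 4 → ℂ) (s : ℝ) (hs : s = 1 ∨ s = -1) :
    s * (hdot (DiracBeta.mulVec z) z).re * (hdot (DiracBeta.mulVec u) u).re
      + ∑ k : Fin 3,
          (hdot ((DiracAlpha k).mulVec z) z).re * (hdot ((DiracAlpha k).mulVec u) u).re
      ≤ (∑ i, ‖z i‖ ^ 2) * (∑ i, ‖u i‖ ^ 2) := by
  have hs2 : s^2 = 1 := by rcases hs with h | h <;> simp [h]
  have hPz : (0:ℝ) ≤ ∑ i, ‖z i‖ ^ 2 := Finset.sum_nonneg fun i _ => sq_nonneg _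
  have hPu : (0:ℝ) ≤ ∑ i, ‖u i‖ ^ 2 := Finset.sum_nonneg fun i _ => sq_nonneg _
  have hz := key_ineq z
  have hu := key_ineq u
  rw [Fin.sum_univ_three]
  have := cs4 (s * (hdot (DiracBeta.mulVec z) z).re)
    (hdot ((DiracAlpha 0).mulVec z) z).re (hdot ((DiracAlpha 1).mulVec z) z).re
    (hdot ((DiracAlpha 2).mulVec z) z).re
    (hdot (DiracBeta.mulVec u) u).re
    (hdot ((DiracAlpha 0).mulVec u) u).re (hdot ((DiracAlpha 1).mulVec u) u).re
    (hdot ((DiracAlpha 2).mulVec u) u).re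
    (∑ i, ‖z i‖ ^ 2) (∑ i, ‖u i‖ ^ 2) hPz hPu (by nlinarith) hu
  linarith
end

section
/- Defining J₀(u) = |u|²_{ℂ⁴} and Jₖ(u) = ⟨αₖu,u⟩ for k=1,2,3, for all u, v ∈ ℂ⁴ one has J₀(u)·J₀(v) − Σ_{k=1}^{3} Jₖ(u)·Jₖ(v) ≥ 0. -/
open Matrix

/-- J₀(u) = |u|². -/
noncomputable def J0 (u : Fin 4 → ℂ) : ℝ := ∑ i, ‖u i‖ ^ 2

/-- Jₖ(u) = ⟨αₖu, u⟩ (a real number since αₖ is Hermitian). -/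
noncomputable def Jk (k : Fin 3) (u : Fin 4 → ℂ) : ℝ :=
  (hdot ((DiracAlpha k).mulVec u) u).re

lemma alpha0 : DiracAlpha 0 = !![0,0,0,1; 0,0,1,0; 0,1,0,0; 1,0,0,0] := by
  ext i j; fin_cases i <;> fin_cases j <;>
    simp [DiracAlpha, PauliMat, Matrix.fromBlocks, finSumFinEquiv, Fin.addCases] <;> rfl
lemma alpha1 : DiracAlpha 1 = !![0,0,0,-Complex.I; 0,0,Complex.I,0; 0,-Complex.I,0,0; Complex.I,0,0,0] := by
  ext i j; fin_cases i <;> fin_cases j <;>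
    simp [DiracAlpha, PauliMat, Matrix.fromBlocks, finSumFinEquiv, Fin.addCases] <;> rfl
lemma alpha2 : DiracAlpha 2 = !![0,0,1,0; 0,0,0,-1; 1,0,0,0; 0,-1,0,0] := by
  ext i j; fin_cases i <;> fin_cases j <;>
    simp [DiracAlpha, PauliMat, Matrix.fromBlocks, finSumFinEquiv, Fin.addCases] <;> rfl
lemma Jk0_eq (u : Fin 4 → ℂ) : Jk 0 u =
    2*((u 3).re*(u 0).re + (u 3).im*(u 0).im + (u 2).re*(u 1).re + (u 2).im*(u 1).im) := by
  simp [Jk, hdot, alpha0, mulVec, dotProduct, Fin.sum_univ_four, Matrix.vecHead, Matrix.vecTail,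
    Complex.add_re, Complex.mul_re]
  ring
lemma Jk1_eq (u : Fin 4 → ℂ) : Jk 1 u =
    2*((u 3).im*(u 0).re - (u 3).re*(u 0).im - (u 2).im*(u 1).re + (u 2).re*(u 1).im) := by
  simp [Jk, hdot, alpha1, mulVec, dotProduct, Fin.sum_univ_four, Matrix.vecHead, Matrix.vecTail,
    Complex.add_re, Complex.mul_re, Complex.mul_im]
  ring
lemma Jk2_eq (u : Fin 4 → ℂ) : Jk 2 u =
    2*((u 2).re*(u 0).re + (u 2).im*(u 0).im - (u 3).re*(u 1).re - (u 3).im*(u 1).im) := by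
  simp [Jk, hdot, alpha2, mulVec, dotProduct, Fin.sum_univ_four, Matrix.vecHead, Matrix.vecTail,
    Complex.add_re, Complex.mul_re, Complex.mul_im]
  ring
lemma J0_eq (u : Fin 4 → ℂ) : J0 u = ∑ i : Fin 4, ((u i).re^2 + (u i).im^2) := by
  simp [J0, Complex.sq_norm, sq, (fun z : ℂ => by rw [← sq, Complex.sq_norm] : ∀ z : ℂ, ‖z‖ * ‖z‖ = Complex.normSq z), Complex.normSq_apply]
lemma J0_nonneg (u : Fin 4 → ℂ) : 0 ≤ J0 u := by
  rw [J0_eq]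
  exact Finset.sum_nonneg fun i _ => by positivity
lemma key (u : Fin 4 → ℂ) : Jk 0 u ^2 + Jk 1 u ^2 + Jk 2 u ^2 ≤ J0 u ^2 := by
  rw [Jk0_eq, Jk1_eq, Jk2_eq, J0_eq, Fin.sum_univ_four]
  nlinarith [sq_nonneg ((u 0).re^2+(u 0).im^2+(u 1).re^2+(u 1).im^2
      - (u 2).re^2-(u 2).im^2-(u 3).re^2-(u 3).im^2),
    sq_nonneg ((u 0).re*(u 2).im - (u 0).im*(u 2).re + (u 1).re*(u 3).im - (u 1).im*(u 3).re)]
theorem current_nonneg (u v : Fin 4 → ℂ) :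
    0 ≤ J0 u * J0 v - ∑ k : Fin 3, Jk k u * Jk k v := by
  rw [Fin.sum_univ_three]
  have hu := key u
  have hv := key v
  have hA := J0_nonneg u
  have hB := J0_nonneg v
  have hCS : (Jk 0 u * Jk 0 v + Jk 1 u * Jk 1 v + Jk 2 u * Jk 2 v)^2 ≤
      (Jk 0 u ^2 + Jk 1 u ^2 + Jk 2 u ^2) * (Jk 0 v ^2 + Jk 1 v ^2 + Jk 2 v ^2) := by
    nlinarith [sq_nonneg (Jk 0 u * Jk 1 v - Jk 1 u * Jk 0 v),
      sq_nonneg (Jk 0 u * Jk 2 v - Jk 2 u * Jk 0 v),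
      sq_nonneg (Jk 1 u * Jk 2 v - Jk 2 u * Jk 1 v)]
  have h2 : (Jk 0 u ^2 + Jk 1 u ^2 + Jk 2 u ^2) * (Jk 0 v ^2 + Jk 1 v ^2 + Jk 2 v ^2)
      ≤ (J0 u)^2 * (J0 v)^2 :=
    mul_le_mul hu hv (by positivity) (by positivity)
  nlinarith [hCS.trans h2, mul_nonneg hA hB]
end

section
/- Let a > |ω| ≥ 0, set c₀ = √(a² − ω²), and let R > 0, C'' > 0. Suppose w : ℝ³ → [0,∞) is continuous, C² on {|x| > R}, satisfies Δw ≥ (a² − ω²)w on {|x| > R}, w(x) → 0 as |x| → ∞, and w(x) ≤ C'' e^{−c₀|x|} on {|x| = R}. Then w(x) ≤ C'' e^{−c₀|x|} for all |x| ≥ R. -/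
open Filter

/-- Laplacian Δf = ∑ₖ ∂ₖ∂ₖ f on euclidean ℝ³. -/
noncomputable def lapE (f : EuclideanSpace ℝ (Fin 3) → ℝ) :
    EuclideanSpace ℝ (Fin 3) → ℝ :=
  fun x => ∑ k : Fin 3,
    fderiv ℝ (fun y => fderiv ℝ f y (EuclideanSpace.single k (1:ℝ))) x
      (EuclideanSpace.single k (1:ℝ))

section Aux

open Set

local notation "E3" => EuclideanSpace ℝ (Fin 3)

/-- Second derivative test: if `g` has a local max at `0` and a second derivative `G` there,
then `G ≤ 0`. -/
lemma secondDerivTest {g g' : ℝ → ℝ} {G : ℝ}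
    (hg : ∀ᶠ t in nhds (0:ℝ), HasDerivAt g (g' t) t)
    (hg' : HasDerivAt g' G 0)
    (hmax : IsLocalMax g 0) : G ≤ 0 := by
  by_contra hGpos
  push_neg at hGpos
  have hg'0 : g' 0 = 0 := by
    have h0 : HasDerivAt g (g' 0) 0 := hg.self_of_nhds
    have := hmax.deriv_eq_zero
    rwa [h0.deriv] at this
  have hslope : Tendsto (fun s => g' s / s) (nhdsWithin 0 {(0:ℝ)}ᶜ) (nhds G) := by
    have := hasDerivAt_iff_tendsto_slope.mp hg'
    simpa [slope_fun_def, hg'0, div_eq_inv_mul] using this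
  have hpos : ∀ᶠ s in nhdsWithin (0:ℝ) (Ioi 0), 0 < g' s := by
    have h1 : ∀ᶠ s in nhdsWithin (0:ℝ) (Ioi 0), 0 < g' s / s :=
      (hslope.mono_left (nhdsWithin_mono _
        (by intro s hs; exact ne_of_gt hs))).eventually_const_lt hGpos
    filter_upwards [h1, self_mem_nhdsWithin] with s hs hs'
    rcases div_pos_iff.mp hs with ⟨h, _⟩ | ⟨_, h2⟩
    · exact h
    · exact absurd h2 (not_lt.mpr (le_of_lt hs'))
  rw [eventually_nhdsWithin_iff] at hpos
  obtain ⟨η, hη, hηs⟩ := Metric.eventually_nhds_iff.mp (hpos.and (hg.and hmax))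
  set t := η / 2 with ht
  have htpos : 0 < t := by positivity
  have hmem : ∀ s ∈ Icc 0 t, HasDerivAt g (g' s) s := by
    intro s hs
    have : dist s 0 < η := by
      rw [Real.dist_eq, sub_zero, abs_of_nonneg hs.1]
      calc s ≤ t := hs.2
        _ < η := by linarith
    exact (hηs this).2.1
  have hcont : ContinuousOn g (Icc 0 t) := fun s hs =>
    ((hmem s hs).continuousAt).continuousWithinAt
  obtain ⟨ξ, hξ, hξeq⟩ := exists_hasDerivAt_eq_slope g g' htpos hcont
    (fun s hs => hmem s ⟨le_of_lt hs.1, le_of_lt hs.2⟩)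
  have hd : dist ξ 0 < η := by
    rw [Real.dist_eq, sub_zero, abs_of_nonneg (le_of_lt hξ.1)]
    calc ξ < t := hξ.2
      _ < η := by linarith
  have hgpos : 0 < g' ξ := (hηs hd).1 hξ.1
  have hgle : g t ≤ g 0 := by
    have : dist t 0 < η := by rw [Real.dist_eq, sub_zero, abs_of_pos htpos]; linarith
    exact (hηs this).2.2
  rw [hξeq] at hgpos
  have : (g t - g 0) / (t - 0) ≤ 0 := by
    apply div_nonpos_of_nonpos_of_nonneg <;> linarith
  linarith

lemma lap_term_nonpos {f : E3 → ℝ} {x₀ : E3}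
    (hf : ContDiffAt ℝ 2 f x₀) (hmax : IsLocalMax f x₀) (e : E3) :
    fderiv ℝ (fun y => fderiv ℝ f y e) x₀ e ≤ 0 := by
  set F : E3 → ℝ := fun y => fderiv ℝ f y e with hF
  have hFc : ContDiffAt ℝ 1 F x₀ :=
    (hf.fderiv_right (by norm_num)).clm_apply contDiffAt_const
  have hFd : DifferentiableAt ℝ F x₀ := hFc.differentiableAt one_ne_zero
  set ℓ : ℝ → E3 := fun t => x₀ + t • e with hℓ
  have hℓd : ∀ t : ℝ, HasDerivAt ℓ e t := by
    intro t
    simpa [hℓ] using ((hasDerivAt_id t).smul_const e).const_add x₀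
  have hℓc : Continuous ℓ := by continuity
  have hℓ0 : ℓ 0 = x₀ := by simp [hℓ]
  set g : ℝ → ℝ := fun t => f (ℓ t) with hg
  set g' : ℝ → ℝ := fun t => F (ℓ t) with hg'
  have hev : ∀ᶠ y in nhds x₀, DifferentiableAt ℝ f y := by
    filter_upwards [hf.eventually (by norm_num)] with y hy
    exact hy.differentiableAt two_ne_zero
  have hgd : ∀ᶠ t in nhds (0:ℝ), HasDerivAt g (g' t) t := by
    have : Tendsto ℓ (nhds 0) (nhds x₀) := by
      rw [← hℓ0]; exact hℓc.continuousAt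
    filter_upwards [this.eventually hev] with t ht
    exact ht.hasFDerivAt.comp_hasDerivAt t (hℓd t)
  have hg'd : HasDerivAt g' (fderiv ℝ F x₀ e) 0 := by
    have h1 : HasFDerivAt F (fderiv ℝ F x₀) (ℓ 0) := hℓ0 ▸ hFd.hasFDerivAt
    exact h1.comp_hasDerivAt 0 (hℓd 0)
  have hgmax : IsLocalMax g 0 := by
    have h2 : Tendsto ℓ (nhds 0) (nhds x₀) := by
      rw [← hℓ0]; exact hℓc.continuousAt
    filter_upwards [h2.eventually hmax] with t ht
    simpa [hg, hℓ0] using ht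
  exact secondDerivTest hgd hg'd hgmax

lemma lapE_nonpos_of_isLocalMax {f : E3 → ℝ} {x₀ : E3}
    (hf : ContDiffAt ℝ 2 f x₀) (hmax : IsLocalMax f x₀) : lapE f x₀ ≤ 0 := by
  apply Finset.sum_nonpos
  intro k _
  exact lap_term_nonpos hf hmax _

lemma hasFDerivAt_norm'' {E : Type*} [NormedAddCommGroup E] [InnerProductSpace ℝ E]
    {x : E} (hx : x ≠ 0) :
    HasFDerivAt (fun y : E => ‖y‖) (‖x‖⁻¹ • innerSL ℝ x) x := by
  have hx' : (0:ℝ) < ‖x‖ := norm_pos_iff.mpr hx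
  have h1 : HasFDerivAt (fun y : E => ‖y‖ ^ 2) (2 • innerSL ℝ x) x :=
    (hasStrictFDerivAt_norm_sq x).hasFDerivAt
  have h2 : HasDerivAt Real.sqrt (1 / (2 * Real.sqrt (‖x‖ ^ 2))) (‖x‖ ^ 2) :=
    Real.hasDerivAt_sqrt (by positivity)
  have h3 := h2.comp_hasFDerivAt x h1
  have heq : (fun y : E => Real.sqrt (‖y‖ ^ 2)) = fun y : E => ‖y‖ := by
    funext y; rw [Real.sqrt_sq (norm_nonneg y)]
  rw [show Real.sqrt ∘ (fun y : E => ‖y‖ ^ 2) = fun y : E => ‖y‖ from heq] at h3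
  refine h3.congr_fderiv ?_
  rw [Real.sqrt_sq (norm_nonneg x)]
  ext y
  simp [smul_smul]
  ring_nf

/-- The barrier function. -/
noncomputable def vfun (c C : ℝ) : E3 → ℝ := fun x => C * Real.exp (-c * ‖x‖)

lemma hasFDerivAt_vexp (c : ℝ) {x : E3} (hx : x ≠ 0) :
    HasFDerivAt (fun y : E3 => Real.exp (-c * ‖y‖))
      (Real.exp (-c * ‖x‖) • (-c) • ‖x‖⁻¹ • innerSL ℝ x) x := by
  have hn := hasFDerivAt_norm'' hx
  have h2 : HasFDerivAt (fun y : E3 => -c * ‖y‖) ((-c) • (‖x‖⁻¹ • innerSL ℝ x)) x :=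
    hn.const_mul (-c)
  exact (Real.hasDerivAt_exp (-c * ‖x‖)).comp_hasFDerivAt x h2

lemma fderiv_vfun_apply (c C : ℝ) {y : E3} (hy : y ≠ 0) (k : Fin 3) :
    fderiv ℝ (vfun c C) y (EuclideanSpace.single k (1:ℝ)) =
      (-c * C) * (Real.exp (-c * ‖y‖) * (y k * ‖y‖⁻¹)) := by
  have h := (hasFDerivAt_vexp c hy).const_mul C
  have : fderiv ℝ (vfun c C) y = C • Real.exp (-c * ‖y‖) • (-c) • ‖y‖⁻¹ • innerSL ℝ y :=
    h.fderiv
  rw [this]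
  simp [real_inner_comm, EuclideanSpace.inner_single_left, EuclideanSpace.inner_single_right]
  ring

lemma hasFDerivAt_coord (k : Fin 3) (x : E3) :
    HasFDerivAt (fun y : E3 => y k) (EuclideanSpace.proj (𝕜 := ℝ) (ι := Fin 3) k) x := by
  exact (EuclideanSpace.proj (𝕜 := ℝ) (ι := Fin 3) k).hasFDerivAt

lemma lapE_term_vfun (c C : ℝ) {x : E3} (hx : x ≠ 0) (k : Fin 3) :
    fderiv ℝ (fun y => fderiv ℝ (vfun c C) y (EuclideanSpace.single k (1:ℝ))) x
        (EuclideanSpace.single k (1:ℝ)) =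
      ((-c * C) * Real.exp (-c * ‖x‖) * (-(‖x‖^2)⁻¹ * ‖x‖⁻¹ + (-c) * ‖x‖⁻¹ * ‖x‖⁻¹)) * (x k)^2
        + (-c * C) * Real.exp (-c * ‖x‖) * ‖x‖⁻¹ := by
  have hr : (0:ℝ) < ‖x‖ := norm_pos_iff.mpr hx
  have hev : (fun y => fderiv ℝ (vfun c C) y (EuclideanSpace.single k (1:ℝ)))
      =ᶠ[nhds x] (fun y => (-c * C) * (Real.exp (-c * ‖y‖) * (y k * ‖y‖⁻¹))) := by
    filter_upwards [eventually_ne_nhds hx] with y hy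
    exact fderiv_vfun_apply c C hy k
  rw [hev.fderiv_eq]
  have hE := hasFDerivAt_vexp c hx
  have hI : HasFDerivAt (fun y : E3 => ‖y‖⁻¹) ((-(‖x‖^2)⁻¹) • ‖x‖⁻¹ • innerSL ℝ x) x :=
    (hasDerivAt_inv (ne_of_gt hr)).comp_hasFDerivAt x (hasFDerivAt_norm'' hx)
  have hBI := (hasFDerivAt_coord k x).mul hI
  have hEBI := hE.mul hBI
  have hP := hEBI.const_mul (-c * C)
  rw [(show HasFDerivAt (fun y : E3 => (-c * C) * (Real.exp (-c * ‖y‖) * (y k * ‖y‖⁻¹))) _ x from hP).fderiv]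
  simp [EuclideanSpace.inner_single_right, real_inner_comm, EuclideanSpace.single_apply]
  ring

lemma sum_sq_coords (x : E3) : ∑ k : Fin 3, (x k)^2 = ‖x‖^2 := by
  rw [EuclideanSpace.norm_eq, Real.sq_sqrt (by positivity)]
  simp [Real.norm_eq_abs, sq_abs]

lemma lapE_vfun_le (c C : ℝ) (hc : 0 ≤ c) (hC : 0 ≤ C) {x : E3} (hx : x ≠ 0) :
    lapE (vfun c C) x ≤ c^2 * vfun c C x := by
  have hr : (0:ℝ) < ‖x‖ := norm_pos_iff.mpr hx
  have hE : (0:ℝ) < Real.exp (-c * ‖x‖) := Real.exp_pos _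
  have h : lapE (vfun c C) x =
      c^2 * vfun c C x - 2*c*C*Real.exp (-c * ‖x‖)/‖x‖ := by
    unfold lapE
    simp only [lapE_term_vfun c C hx]
    rw [Finset.sum_add_distrib, ← Finset.mul_sum, sum_sq_coords, Finset.sum_const]
    simp only [Finset.card_univ, Fintype.card_fin, nsmul_eq_mul, vfun]
    field_simp
    ring
  rw [h]
  have : 0 ≤ 2*c*C*Real.exp (-c * ‖x‖)/‖x‖ := by positivity
  linarith

lemma lapE_sub {f g : E3 → ℝ} {x : E3} (hf : ContDiffAt ℝ 2 f x) (hg : ContDiffAt ℝ 2 g x) :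
    lapE (fun y => f y - g y) x = lapE f x - lapE g x := by
  unfold lapE
  rw [← Finset.sum_sub_distrib]
  refine Finset.sum_congr rfl fun k _ => ?_
  set e := EuclideanSpace.single k (1:ℝ) with he
  have hF : DifferentiableAt ℝ (fun y => fderiv ℝ f y e) x :=
    ((hf.fderiv_right (m := 1) (by norm_num)).clm_apply contDiffAt_const).differentiableAt one_ne_zero
  have hG : DifferentiableAt ℝ (fun y => fderiv ℝ g y e) x :=
    ((hg.fderiv_right (m := 1) (by norm_num)).clm_apply contDiffAt_const).differentiableAt one_ne_zero
  have hev : (fun y => fderiv ℝ (fun z => f z - g z) y e) =ᶠ[nhds x]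
      (fun y => fderiv ℝ f y e - fderiv ℝ g y e) := by
    filter_upwards [hf.eventually (by norm_num), hg.eventually (by norm_num)] with y hfy hgy
    rw [fderiv_fun_sub (hfy.differentiableAt two_ne_zero) (hgy.differentiableAt two_ne_zero)]
    rfl
  rw [hev.fderiv_eq, fderiv_fun_sub hF hG]
  rfl

lemma contDiffAt_vfun (c C : ℝ) {x : E3} (hx : x ≠ 0) : ContDiffAt ℝ 2 (vfun c C) x := by
  have h1 : ContDiffAt ℝ 2 (fun y : E3 => ‖y‖) x := contDiffAt_norm ℝ hx
  have h2 : ContDiffAt ℝ 2 (fun y : E3 => -c * ‖y‖) x := contDiffAt_const.mul h1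
  have h3 : ContDiffAt ℝ 2 (fun y : E3 => Real.exp (-c * ‖y‖)) x :=
    ((Real.contDiff_exp.of_le le_top).contDiffAt).comp x h2
  exact contDiffAt_const.mul h3

lemma continuous_vfun (c C : ℝ) : Continuous (vfun c C) := by
  unfold vfun
  fun_prop

end Aux

theorem exponential_decay_comparison
    (a ω R C'' : ℝ) (ha : |ω| < a) (hω : 0 ≤ |ω|) (hR : 0 < R) (hC : 0 < C'')
    (w : EuclideanSpace ℝ (Fin 3) → ℝ)
    (hw_cont : Continuous w)
    (hw_nonneg : ∀ x, 0 ≤ w x)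
    (hw_C2 : ContDiffOn ℝ 2 w {x | R < ‖x‖})
    (hw_sub : ∀ x, R < ‖x‖ → (a ^ 2 - ω ^ 2) * w x ≤ lapE w x)
    (hw_decay : Tendsto w (Bornology.cobounded _) (nhds 0))
    (hw_bdry : ∀ x, ‖x‖ = R → w x ≤ C'' * Real.exp (-(Real.sqrt (a ^ 2 - ω ^ 2)) * ‖x‖)) :
    ∀ x, R ≤ ‖x‖ → w x ≤ C'' * Real.exp (-(Real.sqrt (a ^ 2 - ω ^ 2)) * ‖x‖) := by
  intro x hx
  by_contra hcon
  push_neg at hcon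
  have hao : 0 < a ^ 2 - ω ^ 2 := by nlinarith [sq_abs ω, abs_nonneg ω]
  set c := Real.sqrt (a ^ 2 - ω ^ 2) with hcdef
  have hc : 0 < c := Real.sqrt_pos.mpr hao
  have hc2 : c ^ 2 = a ^ 2 - ω ^ 2 := Real.sq_sqrt hao.le
  have hveq : ∀ y : EuclideanSpace ℝ (Fin 3),
      vfun c C'' y = C'' * Real.exp (-c * ‖y‖) := fun y => rfl
  set u : EuclideanSpace ℝ (Fin 3) → ℝ := fun y => w y - vfun c C'' y with hu
  have hvcont : Continuous (vfun c C'') := continuous_vfun c C''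
  have hucont : Continuous u := hw_cont.sub hvcont
  have hvnonneg : ∀ y, 0 ≤ vfun c C'' y := fun y => by
    rw [hveq]; positivity
  have hux : 0 < u x := by
    have : vfun c C'' x < w x := by rw [hveq]; exact hcon
    simp only [hu]
    linarith
  -- find the cutoff radius
  have hev : ∀ᶠ y in Bornology.cobounded _, w y < u x := hw_decay.eventually_lt_const hux
  obtain ⟨M, -, hM⟩ := Filter.hasBasis_cobounded_norm.eventually_iff.mp hev
  set M' := max M (‖x‖ + 1) with hM'
  set K := {y : EuclideanSpace ℝ (Fin 3) | R ≤ ‖y‖ ∧ ‖y‖ ≤ M'} with hK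
  have hKclosed : IsClosed K := by
    have : K = {y : EuclideanSpace ℝ (Fin 3) | R ≤ ‖y‖} ∩
        {y : EuclideanSpace ℝ (Fin 3) | ‖y‖ ≤ M'} := rfl
    rw [this]
    exact (isClosed_le continuous_const continuous_norm).inter
      (isClosed_le continuous_norm continuous_const)
  have hKcomp : IsCompact K :=
    (isCompact_closedBall (0 : EuclideanSpace ℝ (Fin 3)) M').of_isClosed_subset hKclosed
      (fun y hy => mem_closedBall_zero_iff.mpr hy.2)
  have hxK : x ∈ K :=
    ⟨hx, (le_add_of_nonneg_right zero_le_one).trans (le_max_right _ _)⟩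
  obtain ⟨z, hzK, hzmax⟩ := hKcomp.exists_isMaxOn ⟨x, hxK⟩ hucont.continuousOn
  have hzmx : u x ≤ u z := hzmax hxK
  have hzpos : 0 < u z := hux.trans_le hzmx
  have hzR : R < ‖z‖ := by
    rcases lt_or_eq_of_le hzK.1 with h | h
    · exact h
    · exfalso
      have hb := hw_bdry z h.symm
      have : u z ≤ 0 := by
        have : vfun c C'' z = C'' * Real.exp (-c * ‖z‖) := hveq z
        simp only [hu]
        linarith
      linarith
  have hz0 : z ≠ 0 := by
    intro h
    rw [h, norm_zero] at hzR
    linarith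
  have hmax : IsLocalMax u z := by
    apply Metric.eventually_nhds_iff.mpr
    refine ⟨‖z‖ - R, by linarith, fun {y} hy => ?_⟩
    have hdy : ‖z‖ - ‖y‖ < ‖z‖ - R := by
      have h1 : ‖z‖ - ‖y‖ ≤ ‖y - z‖ := by
        have := norm_sub_norm_le (z) (y)
        have h2 : ‖z - y‖ = ‖y - z‖ := norm_sub_rev z y
        linarith
      have h3 : ‖y - z‖ < ‖z‖ - R := by rwa [← dist_eq_norm]
      linarith
    have hyR : R < ‖y‖ := by linarith
    by_cases hyM : ‖y‖ ≤ M'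
    · exact hzmax ⟨hyR.le, hyM⟩
    · have hyM' : M ≤ ‖y‖ := (le_max_left M _).trans (not_le.mp hyM).le
      have h1 : w y < u x := hM hyM'
      have h2 : u y ≤ w y := by
        simp only [hu]
        linarith [hvnonneg y]
      linarith
  have hwC2z : ContDiffAt ℝ 2 w z :=
    hw_C2.contDiffAt ((isOpen_lt continuous_const continuous_norm).mem_nhds hzR)
  have hvC2z : ContDiffAt ℝ 2 (vfun c C'') z := contDiffAt_vfun c C'' hz0
  have hlap : lapE u z ≤ 0 := lapE_nonpos_of_isLocalMax (hwC2z.sub hvC2z) hmax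
  have hsub : lapE u z = lapE w z - lapE (vfun c C'') z := lapE_sub hwC2z hvC2z
  have h1 : (a ^ 2 - ω ^ 2) * w z ≤ lapE w z := hw_sub z hzR
  have h2 : lapE (vfun c C'') z ≤ c ^ 2 * vfun c C'' z :=
    lapE_vfun_le c C'' hc.le hC.le hz0
  have huz : u z = w z - vfun c C'' z := rfl
  rw [hc2] at h2
  have hp : 0 < (a ^ 2 - ω ^ 2) * u z := mul_pos hao hzpos
  rw [huz, mul_sub] at hp
  linarith
end
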